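/- Let 𝒟 be a finite type and ρ : 𝒟 × 𝒟 → ℝ a probability distribution that is pairwise realizable (i.e., for every k there exist random variables X₁,…,X_k with each pair (X_i,X_j), i ≠ j, distributed according to ρ). Then ρ is a convex combination of symmetric product distributions: ρ(a,b) = Σ_s α_s p_s(a) p_s(b) with α_s ≥ 0, Σ α_s = 1, p_s(a) ≥ 0, Σ_a p_s(a) = 1. -/

import Mathlib

open Finset

lemma indProd (P Q : Prop) [Decidable P] [Decidable Q] :
    (if P ∧ Q then (1:ℝ) else 0) = (if P then (1:ℝ) else 0) * (if Q then (1:ℝ) else 0) := by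
  by_cases hP : P <;> by_cases hQ : Q <;> simp [hP, hQ]

lemma pair_count {D : Type*} [DecidableEq D] {k : ℕ} (x : Fin k → D) (a b : D) :
    (∑ i : Fin k, ∑ j : Fin k, if i = j then 0 else (if x i = a ∧ x j = b then (1:ℝ) else 0))
      = (∑ i : Fin k, if x i = a then (1:ℝ) else 0) * (∑ j : Fin k, if x j = b then (1:ℝ) else 0)
        - (if a = b then (∑ i : Fin k, if x i = a then (1:ℝ) else 0) else 0) := by
  have h1 : ∀ i j : Fin k, (if x i = a ∧ x j = b then (1:ℝ) else 0)
      = (if x i = a then (1:ℝ) else 0) * (if x j = b then (1:ℝ) else 0) :=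
    fun i j => indProd _ _
  have h2 : ∀ i : Fin k, (if x i = a then (1:ℝ) else 0) * (if x i = b then (1:ℝ) else 0)
      = (if a = b then (if x i = a then (1:ℝ) else 0) else 0) := by
    intro i
    by_cases hab : a = b
    · subst hab; by_cases h : x i = a <;> simp [h]
    · by_cases h : x i = a <;> by_cases h' : x i = b <;> simp [h, h', hab]
      exact fun hh => hab hh.symm
  have h3 : ∀ i j : Fin k, (if i = j then 0 else (if x i = a ∧ x j = b then (1:ℝ) else 0))
      = (if x i = a ∧ x j = b then (1:ℝ) else 0)
        - (if i = j then (if x i = a then (1:ℝ) else 0) * (if x j = b then (1:ℝ) else 0) else 0) := by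
    intro i j
    by_cases h : i = j
    · simp [h, h1]
    · simp [h]
  calc (∑ i : Fin k, ∑ j : Fin k, if i = j then 0 else (if x i = a ∧ x j = b then (1:ℝ) else 0))
      = ∑ i : Fin k, ((∑ j : Fin k, if x i = a ∧ x j = b then (1:ℝ) else 0)
          - ∑ j : Fin k, if i = j then (if x i = a then (1:ℝ) else 0) * (if x j = b then (1:ℝ) else 0) else 0) := by
        refine Finset.sum_congr rfl fun i _ => ?_
        rw [← Finset.sum_sub_distrib]
        exact Finset.sum_congr rfl fun j _ => h3 i j
    _ = (∑ i : Fin k, ∑ j : Fin k, if x i = a ∧ x j = b then (1:ℝ) else 0)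
          - ∑ i : Fin k, (if x i = a then (1:ℝ) else 0) * (if x i = b then (1:ℝ) else 0) := by
        rw [Finset.sum_sub_distrib]
        congr 1
        refine Finset.sum_congr rfl fun i _ => ?_
        simp
    _ = (∑ i : Fin k, if x i = a then (1:ℝ) else 0) * (∑ j : Fin k, if x j = b then (1:ℝ) else 0)
        - (if a = b then (∑ i : Fin k, if x i = a then (1:ℝ) else 0) else 0) := by
        congr 1
        · rw [Finset.sum_mul_sum]
          exact Finset.sum_congr rfl fun i _ => Finset.sum_congr rfl fun j _ => h1 i j
        · rw [Finset.sum_congr rfl fun i _ => h2 i]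
          by_cases hab : a = b <;> simp [hab]

theorem stmt_10 {D : Type*} [Fintype D] [DecidableEq D]
    (ρ : D × D → ℝ) (hρ0 : ∀ q, 0 ≤ ρ q) (hρ1 : ∑ q : D × D, ρ q = 1)
    (hreal : ∀ k : ℕ,
      ∃ μ : (Fin k → D) → ℝ, (∀ x, 0 ≤ μ x) ∧ (∑ x, μ x = 1) ∧
        ∀ i j : Fin k, i ≠ j → ∀ a b : D,
          (∑ x : Fin k → D, if x i = a ∧ x j = b then μ x else 0) = ρ (a, b)) :
    ∃ (r : ℕ) (α : Fin r → ℝ) (p : Fin r → D → ℝ),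
      (∀ s, 0 ≤ α s) ∧ (∑ s, α s = 1) ∧
      (∀ s a, 0 ≤ p s a) ∧ (∀ s, ∑ a, p s a = 1) ∧
      ∀ a b, ρ (a, b) = ∑ s, α s * (p s a * p s b) := by
  classical
  -- D is nonempty
  have hDne : Nonempty D := by
    by_contra h
    rw [not_nonempty_iff] at h
    rw [Finset.univ_eq_empty, Finset.sum_empty] at hρ1
    norm_num at hρ1
  set n : ℕ := Module.finrank ℝ ((D × D) → ℝ) + 1 with hn
  set g : (D → ℝ) → (D × D) → ℝ := fun p q => p q.1 * p q.2 with hg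
  set S : Set ((D × D) → ℝ) := g '' stdSimplex ℝ D with hS
  have hcardD : (0:ℝ) < (Fintype.card D : ℝ) := by
    have := Fintype.card_pos (α := D)
    exact_mod_cast this
  set unif : D → ℝ := fun _ => (Fintype.card D : ℝ)⁻¹ with hunifdef
  have hunif : unif ∈ stdSimplex ℝ D := by
    constructor
    · intro a; positivity
    · rw [Finset.sum_const, Finset.card_univ, nsmul_eq_mul]
      field_simp
  set T : Set ((Fin n → ℝ) × (Fin n → D → ℝ)) :=
    (stdSimplex ℝ (Fin n)) ×ˢ (Set.univ.pi fun _ => stdSimplex ℝ D) with hT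
  set Φ : (Fin n → ℝ) × (Fin n → D → ℝ) → (D × D) → ℝ :=
    fun wp q => ∑ i, wp.1 i * (wp.2 i q.1 * wp.2 i q.2) with hΦ
  set K : Set ((D × D) → ℝ) := Φ '' T with hK
  -- K ⊆ convexHull S
  have hK1 : K ⊆ convexHull ℝ S := by
    rintro _ ⟨⟨w, P⟩, ⟨hw, hP⟩, rfl⟩
    have : Φ (w, P) = ∑ i : Fin n, w i • g (P i) := by
      funext q
      simp only [hΦ, hg, Finset.sum_apply, Pi.smul_apply, smul_eq_mul]
    rw [this]
    apply Convex.sum_mem (convex_convexHull ℝ S)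
    · intro i _; exact hw.1 i
    · exact hw.2
    · intro i _
      exact subset_convexHull ℝ S ⟨P i, hP i (Set.mem_univ i), rfl⟩
  -- convexHull S ⊆ K
  have hK2 : convexHull ℝ S ⊆ K := by
    intro y hy
    rw [convexHull_eq_union] at hy
    simp only [Set.mem_iUnion, exists_prop] at hy
    obtain ⟨t, ht, haff, hyt⟩ := hy
    have hm : Fintype.card ↥t ≤ n := by
      have h1 := haff.card_le_finrank_succ
      have h2 : Module.finrank ℝ
            ↥(vectorSpan ℝ (Set.range (Subtype.val : ↥t → ((D × D) → ℝ))))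
          ≤ Module.finrank ℝ ((D × D) → ℝ) := Submodule.finrank_le _
      rw [hn, Fintype.card_coe] at *
      omega
    rw [Finset.convexHull_eq] at hyt
    obtain ⟨w, hw0, hw1, hcm⟩ := hyt
    rw [Finset.centerMass_eq_of_sum_1 _ _ hw1] at hcm
    -- choose simplex preimages
    have hch : ∀ z : (D × D) → ℝ, ∃ p ∈ stdSimplex ℝ D, z ∈ S → g p = z := by
      intro z
      by_cases h : z ∈ S
      · obtain ⟨p, hp, rfl⟩ := h
        exact ⟨p, hp, fun _ => rfl⟩
      · exact ⟨unif, hunif, fun h' => absurd h' h⟩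
    choose pe hpe1 hpe2 using hch
    set m : ℕ := Fintype.card ↥t with hmdef
    set e : ↥t ≃ Fin m := Fintype.equivFin ↥t with he
    set w' : Fin n → ℝ := fun i =>
      ∑ j : Fin m, if i = Fin.castLE hm j then w ((e.symm j : ↥t) : (D × D) → ℝ) else 0 with hw'
    set P' : Fin n → D → ℝ := fun i =>
      if h : (i : ℕ) < m then pe ((e.symm ⟨(i : ℕ), h⟩ : ↥t) : (D × D) → ℝ) else unif with hP'
    have hPcast : ∀ j : Fin m, P' (Fin.castLE hm j) = pe ((e.symm j : ↥t) : (D × D) → ℝ) := by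
      intro j
      have hlt : ((Fin.castLE hm j : Fin n) : ℕ) < m := by
        simp [Fin.coe_castLE]
      rw [hP']
      simp only [hlt, dif_pos]
      congr
    have hw'0 : ∀ i, 0 ≤ w' i := by
      intro i
      apply Finset.sum_nonneg
      intro j _
      split
      · exact hw0 _ (e.symm j).2
      · exact le_refl 0
    have hsum_w' : ∑ i, w' i = 1 := by
      rw [hw']
      rw [Finset.sum_comm]
      have : ∀ j : Fin m, (∑ i : Fin n,
          if i = Fin.castLE hm j then w ((e.symm j : ↥t) : (D × D) → ℝ) else 0)
          = w ((e.symm j : ↥t) : (D × D) → ℝ) := by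
        intro j
        rw [Finset.sum_ite_eq']
        simp
      rw [Finset.sum_congr rfl fun j _ => this j]
      rw [← hw1]
      rw [← Finset.sum_coe_sort t w]
      exact Equiv.sum_comp e.symm (fun y : ↥t => w (y : (D × D) → ℝ))
    refine ⟨(w', P'), ⟨⟨hw'0, hsum_w'⟩, ?_⟩, ?_⟩
    · intro i _
      rw [hP']
      dsimp only
      split
      · exact hpe1 _
      · exact hunif
    · -- Φ (w', P') = y
      rw [← hcm]
      funext q
      have hterm : ∀ i : Fin n, w' i * (P' i q.1 * P' i q.2)
          = ∑ j : Fin m, if i = Fin.castLE hm j then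
              w ((e.symm j : ↥t) : (D × D) → ℝ) * (P' i q.1 * P' i q.2) else 0 := by
        intro i
        rw [hw', Finset.sum_mul]
        exact Finset.sum_congr rfl fun j _ => by rw [ite_mul, zero_mul]
      calc Φ (w', P') q = ∑ i : Fin n, w' i * (P' i q.1 * P' i q.2) := rfl
        _ = ∑ i : Fin n, ∑ j : Fin m, (if i = Fin.castLE hm j then
              w ((e.symm j : ↥t) : (D × D) → ℝ) * (P' i q.1 * P' i q.2) else 0) := by
            exact Finset.sum_congr rfl fun i _ => hterm i
        _ = ∑ j : Fin m, ∑ i : Fin n, (if i = Fin.castLE hm j then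
              w ((e.symm j : ↥t) : (D × D) → ℝ) * (P' i q.1 * P' i q.2) else 0) :=
            Finset.sum_comm
        _ = ∑ j : Fin m, w ((e.symm j : ↥t) : (D × D) → ℝ)
              * (P' (Fin.castLE hm j) q.1 * P' (Fin.castLE hm j) q.2) := by
            refine Finset.sum_congr rfl fun j _ => ?_
            rw [Finset.sum_ite_eq']
            simp
        _ = ∑ j : Fin m, w ((e.symm j : ↥t) : (D × D) → ℝ) * ((e.symm j : ↥t) : (D × D) → ℝ) q := by
            refine Finset.sum_congr rfl fun j _ => ?_
            rw [hPcast j]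
            congr 1
            have hmem : ((e.symm j : ↥t) : (D × D) → ℝ) ∈ S := ht (e.symm j).2
            have := hpe2 _ hmem
            exact congrFun this q
        _ = (∑ i ∈ t, w i • id i) q := by
            rw [← Finset.sum_coe_sort t (fun i => w i • id i)]
            rw [← Equiv.sum_comp e.symm (fun y : ↥t => w (y : (D × D) → ℝ) • id ((y : (D × D) → ℝ)))]
            rw [Finset.sum_apply]
            rfl
  have hKeq : convexHull ℝ S = K := Set.Subset.antisymm hK2 hK1
  -- K is closed
  have hTc : IsCompact T :=
    (isCompact_stdSimplex ℝ _).prod (isCompact_univ_pi fun _ => isCompact_stdSimplex ℝ _)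
  have hΦc : Continuous Φ := by
    apply continuous_pi
    intro q
    apply continuous_finset_sum
    intro i _
    exact ((continuous_apply i).comp continuous_fst).mul (by fun_prop)
  have hKclosed : IsClosed (convexHull ℝ S) := by
    rw [hKeq]; exact (hTc.image hΦc).isClosed
  -- ρ is in the convex hull
  have hρK : ρ ∈ convexHull ℝ S := by
    by_contra hcon
    obtain ⟨f, u, hfu, hfρ⟩ :=
      geometric_hahn_banach_closed_point (convex_convexHull ℝ S) hKclosed hcon
    have hfS : ∀ p ∈ stdSimplex ℝ D, f (g p) < u := fun p hp =>
      hfu _ (subset_convexHull ℝ S ⟨p, hp, rfl⟩)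
    set F : D × D → ℝ := fun q => f (fun q' => if q = q' then 1 else 0) with hF
    have hfrep : ∀ M : (D × D) → ℝ, f M = ∑ q, M q * F q := by
      intro M
      conv_lhs => rw [pi_eq_sum_univ M]
      rw [map_sum]
      simp only [map_smul, smul_eq_mul]
      rfl
    set C : ℝ := ∑ a : D, |F (a, a)| with hC
    have key : ∀ k : ℕ, 0 < k → (k:ℝ) * ((k:ℝ) - 1) * f ρ ≤ (k:ℝ)^2 * u + C * k := by
      intro k hk
      obtain ⟨μ, hμ0, hμ1, hμm⟩ := hreal k
      have hkR : (0:ℝ) < (k:ℝ) := by exact_mod_cast hk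
      set cnt : (Fin k → D) → D → ℝ := fun x a => ∑ i, if x i = a then (1:ℝ) else 0 with hcnt
      have hcnt0 : ∀ x a, 0 ≤ cnt x a := fun x a =>
        Finset.sum_nonneg fun i _ => by positivity
      have hcntk : ∀ x a, cnt x a ≤ (k:ℝ) := by
        intro x a
        calc cnt x a ≤ ∑ _i : Fin k, (1:ℝ) :=
              Finset.sum_le_sum (fun i _ => by split <;> norm_num)
          _ = k := by simp
      have hcnts : ∀ x, ∑ a, cnt x a = (k:ℝ) := by
        intro x
        simp only [hcnt]
        rw [Finset.sum_comm]
        have : ∀ i : Fin k, ∑ a, (if x i = a then (1:ℝ) else 0) = 1 := by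
          intro i
          rw [Finset.sum_ite_eq]
          simp
        rw [Finset.sum_congr rfl fun i _ => this i]
        simp
      have stepA : ∀ a b : D, (k:ℝ) * ((k:ℝ) - 1) * ρ (a, b)
          = ∑ x : Fin k → D, μ x * (cnt x a * cnt x b - if a = b then cnt x a else 0) := by
        intro a b
        have e1 : (∑ i : Fin k, ∑ j : Fin k, (if i = j then 0 else ρ (a,b)))
            = (k:ℝ) * ((k:ℝ) - 1) * ρ (a,b) := by
          have h1 : ∀ i : Fin k, (∑ j : Fin k, (if i = j then 0 else ρ (a,b)))
              = (k:ℝ) * ρ (a,b) - ρ (a,b) := by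
            intro i
            have h2 : ∀ j : Fin k, (if i = j then 0 else ρ (a,b))
                = ρ (a,b) - (if i = j then ρ (a,b) else 0) := by
              intro j; by_cases h : i = j <;> simp [h]
            rw [Finset.sum_congr rfl fun j _ => h2 j, Finset.sum_sub_distrib,
              Finset.sum_const, Finset.card_univ, Finset.sum_ite_eq]
            simp [nsmul_eq_mul]
          rw [Finset.sum_congr rfl fun i _ => h1 i, Finset.sum_const, Finset.card_univ]
          simp only [Fintype.card_fin, nsmul_eq_mul]
          ring
        have e2 : (∑ i : Fin k, ∑ j : Fin k, (if i = j then 0 else ρ (a,b)))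
            = ∑ i : Fin k, ∑ j : Fin k,
                ∑ x : Fin k → D, μ x * (if i = j then 0 else (if x i = a ∧ x j = b then (1:ℝ) else 0)) := by
          refine Finset.sum_congr rfl fun i _ => Finset.sum_congr rfl fun j _ => ?_
          by_cases h : i = j
          · simp [h]
          · rw [← hμm i j h a b]
            simp only [h, if_false]
            refine Finset.sum_congr rfl fun x _ => ?_
            by_cases hc : x i = a ∧ x j = b <;> simp [hc]
        have e3 : (∑ i : Fin k, ∑ j : Fin k,
              ∑ x : Fin k → D, μ x * (if i = j then 0 else (if x i = a ∧ x j = b then (1:ℝ) else 0)))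
            = ∑ x : Fin k → D, μ x * (cnt x a * cnt x b - if a = b then cnt x a else 0) := by
          rw [Finset.sum_congr rfl fun i (_ : i ∈ Finset.univ) => Finset.sum_comm,
            Finset.sum_comm]
          refine Finset.sum_congr rfl fun x _ => ?_
          calc (∑ i : Fin k, ∑ j : Fin k,
                μ x * (if i = j then 0 else (if x i = a ∧ x j = b then (1:ℝ) else 0)))
              = μ x * ∑ i : Fin k, ∑ j : Fin k,
                (if i = j then 0 else (if x i = a ∧ x j = b then (1:ℝ) else 0)) := by
                rw [Finset.mul_sum]
                exact Finset.sum_congr rfl fun i _ => by rw [Finset.mul_sum]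
            _ = μ x * (cnt x a * cnt x b - if a = b then cnt x a else 0) := by
                rw [pair_count x a b]
        rw [← e1, e2, e3]
      -- the quadratic and diagonal pieces
      set G : (Fin k → D) → ℝ := fun x => ∑ a, ∑ b, F (a, b) * (cnt x a * cnt x b) with hG
      set Dg : (Fin k → D) → ℝ := fun x => ∑ a, F (a, a) * cnt x a with hDg
      have claim1 : (k:ℝ) * ((k:ℝ) - 1) * f ρ = ∑ x : Fin k → D, μ x * (G x - Dg x) := by
        rw [hfrep ρ, Finset.mul_sum]
        rw [Fintype.sum_prod_type]
        have : ∀ a b : D, (k:ℝ) * ((k:ℝ) - 1) * (ρ (a,b) * F (a,b))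
            = ∑ x : Fin k → D, μ x * (F (a,b) * (cnt x a * cnt x b)
                - F (a,b) * (if a = b then cnt x a else 0)) := by
          intro a b
          have := stepA a b
          calc (k:ℝ) * ((k:ℝ) - 1) * (ρ (a,b) * F (a,b))
              = ((k:ℝ) * ((k:ℝ) - 1) * ρ (a,b)) * F (a,b) := by ring
            _ = (∑ x : Fin k → D, μ x * (cnt x a * cnt x b - if a = b then cnt x a else 0)) * F (a,b) := by
                rw [this]
            _ = ∑ x : Fin k → D, μ x * (F (a,b) * (cnt x a * cnt x b)
                - F (a,b) * (if a = b then cnt x a else 0)) := by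
                rw [Finset.sum_mul]
                exact Finset.sum_congr rfl fun x _ => by ring
        rw [Finset.sum_congr rfl fun a _ => Finset.sum_congr rfl fun b _ => this a b]
        rw [Finset.sum_congr rfl fun a (_ : a ∈ Finset.univ) => Finset.sum_comm,
          Finset.sum_comm]
        refine Finset.sum_congr rfl fun x _ => ?_
        have hdiag : ∀ a : D, (∑ b : D, F (a,b) * (if a = b then cnt x a else 0))
            = F (a,a) * cnt x a := by
          intro a
          have : ∀ b : D, F (a,b) * (if a = b then cnt x a else 0)
              = if a = b then F (a,b) * cnt x a else 0 := by
            intro b; by_cases h : a = b <;> simp [h]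
          rw [Finset.sum_congr rfl fun b _ => this b, Finset.sum_ite_eq]
          simp
        calc (∑ a : D, ∑ b : D, μ x * (F (a,b) * (cnt x a * cnt x b)
                - F (a,b) * (if a = b then cnt x a else 0)))
            = μ x * ∑ a : D, ∑ b : D, (F (a,b) * (cnt x a * cnt x b)
                - F (a,b) * (if a = b then cnt x a else 0)) := by
              rw [Finset.mul_sum]
              exact Finset.sum_congr rfl fun a _ => by rw [Finset.mul_sum]
          _ = μ x * (G x - Dg x) := by
              congr 1
              rw [Finset.sum_congr rfl fun a (_ : a ∈ Finset.univ) => Finset.sum_sub_distrib _ _,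
                Finset.sum_sub_distrib]
              congr 1
              exact Finset.sum_congr rfl fun a _ => hdiag a
      have claim2 : ∀ x : Fin k → D, G x - Dg x ≤ (k:ℝ)^2 * u + C * k := by
        intro x
        have hGx : G x ≤ (k:ℝ)^2 * u := by
          set p : D → ℝ := fun a => cnt x a / k with hp
          have hps : p ∈ stdSimplex ℝ D := by
            constructor
            · intro a
              exact div_nonneg (hcnt0 x a) (le_of_lt hkR)
            · rw [← Finset.sum_div, hcnts x, div_self (ne_of_gt hkR)]
          have hlt : f (g p) < u := hfS p hps
          have hGfp : G x = (k:ℝ)^2 * f (g p) := by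
            rw [hfrep (g p), Finset.mul_sum, Fintype.sum_prod_type]
            refine Finset.sum_congr rfl fun a _ => Finset.sum_congr rfl fun b _ => ?_
            simp only [hg, hp]
            field_simp
          rw [hGfp]
          have h2 : (0:ℝ) ≤ (k:ℝ)^2 := sq_nonneg _
          nlinarith [hlt, h2, hkR]
        have hDgx : -(C * k) ≤ Dg x := by
          have : ∀ a : D, -(|F (a,a)| * k) ≤ F (a,a) * cnt x a := by
            intro a
            have h1 : 0 ≤ F (a,a) + |F (a,a)| := by
              have := neg_abs_le (F (a,a)); linarith
            have h2 := mul_nonneg h1 (hcnt0 x a)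
            have h3 := mul_nonneg (abs_nonneg (F (a,a))) (sub_nonneg.mpr (hcntk x a))
            nlinarith [h2, h3]
          calc -(C * k) = ∑ a : D, -(|F (a,a)| * k) := by
                rw [hC, Finset.sum_mul, ← Finset.sum_neg_distrib]
            _ ≤ Dg x := Finset.sum_le_sum fun a _ => this a
        linarith [hGx, hDgx]
      calc (k:ℝ) * ((k:ℝ) - 1) * f ρ = ∑ x : Fin k → D, μ x * (G x - Dg x) := claim1
        _ ≤ ∑ x : Fin k → D, μ x * ((k:ℝ)^2 * u + C * k) :=
            Finset.sum_le_sum fun x _ => mul_le_mul_of_nonneg_left (claim2 x) (hμ0 x)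
        _ = (k:ℝ)^2 * u + C * k := by rw [← Finset.sum_mul, hμ1, one_mul]
    -- choose k large and derive contradiction
    have hδ : 0 < f ρ - u := sub_pos.mpr hfρ
    obtain ⟨N, hN⟩ := exists_nat_gt ((C + f ρ) / (f ρ - u))
    set k : ℕ := N + 1 with hk
    have hk0 : 0 < k := Nat.succ_pos N
    have hkR : (C + f ρ) / (f ρ - u) < (k : ℝ) := by
      rw [hk]
      push_cast
      linarith [hN]
    have hkR' : C + f ρ < (k : ℝ) * (f ρ - u) := by
      rw [div_lt_iff₀ hδ] at hkR
      linarith [hkR]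
    have hkey := key k hk0
    have hk0R : (0:ℝ) < (k : ℝ) := by exact_mod_cast hk0
    nlinarith [mul_lt_mul_of_pos_left hkR' hk0R, hkey, hk0R]
  -- extract the representation
  rw [hKeq] at hρK
  obtain ⟨⟨w, P⟩, ⟨hw, hP⟩, hΦρ⟩ := hρK
  refine ⟨n, w, P, fun s => hw.1 s, hw.2, fun s a => (hP s (Set.mem_univ s)).1 a,
    fun s => (hP s (Set.mem_univ s)).2, fun a b => ?_⟩
  rw [← hΦρ]
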